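/- Let W be entrywise nonnegative with spectral radius less than 1, V := (1 - W)⁻¹, W̃ := W V, D := diag(V)⁻¹, and W̄ := W D V. Then W̄ ≤ W̃ entrywise, i.e., W̄_{ij} ≤ W̃_{ij} for all i, j. -/

import Mathlib

open Matrix

attribute [local instance] Matrix.linftyOpNormedRing Matrix.linftyOpNormedAlgebra

section Aux

variable {n : ℕ}

lemma entry_nnnorm_le_linfty (M : Matrix (Fin n) (Fin n) ℝ) (i j : Fin n) :
    ‖M i j‖₊ ≤ ‖M‖₊ := by
  rw [Matrix.linfty_opNNNorm_def]
  calc ‖M i j‖₊ ≤ ∑ k, ‖M i k‖₊ :=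
        Finset.single_le_sum (f := fun k => ‖M i k‖₊) (fun k _ => zero_le) (Finset.mem_univ j)
    _ ≤ _ := Finset.le_sup (f := fun a => ∑ k, ‖M a k‖₊) (Finset.mem_univ i)

lemma entry_norm_le_linfty (M : Matrix (Fin n) (Fin n) ℝ) (i j : Fin n) :
    ‖M i j‖ ≤ ‖M‖ := entry_nnnorm_le_linfty M i j

lemma pow_entry_nonneg (W : Matrix (Fin n) (Fin n) ℝ) (hpos : ∀ i j, 0 ≤ W i j)
    (m : ℕ) : ∀ i j, 0 ≤ (W ^ m) i j := by
  induction m with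
  | zero => intro i j; simp [Matrix.one_apply]; positivity
  | succ m ih =>
    intro i j
    rw [pow_succ, Matrix.mul_apply]
    exact Finset.sum_nonneg fun k _ => mul_nonneg (ih i k) (hpos k j)

lemma nnnorm_map_ofReal (M : Matrix (Fin n) (Fin n) ℝ) :
    ‖M.map (Complex.ofReal)‖₊ = ‖M‖₊ := by
  rw [Matrix.linfty_opNNNorm_def, Matrix.linfty_opNNNorm_def]
  congr 1
  funext i
  simp [Matrix.map_apply]

lemma hasSum_geom (W : Matrix (Fin n) (Fin n) ℝ) (i₀ : Fin n)
    (hρ : ∀ μ ∈ spectrum ℂ (W.map (Complex.ofReal)), ‖μ‖ < 1) :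
    HasSum (fun m : ℕ => W ^ m) ((1 - W)⁻¹) := by
  haveI : Nonempty (Fin n) := ⟨i₀⟩
  haveI : Nontrivial (Matrix (Fin n) (Fin n) ℝ) := by
    refine ⟨1, 0, fun h => ?_⟩
    have := congrFun (congrFun h i₀) i₀
    simp [Matrix.one_apply] at this
  haveI : Nontrivial (Matrix (Fin n) (Fin n) ℂ) := by
    refine ⟨1, 0, fun h => ?_⟩
    have := congrFun (congrFun h i₀) i₀
    simp [Matrix.one_apply] at this
  set A : Matrix (Fin n) (Fin n) ℂ := W.map (Complex.ofReal) with hA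
  have hrad : spectralRadius ℂ A < 1 := by
    have h1 : spectralRadius ℂ A < (1 : NNReal) := by
      apply spectrum.spectralRadius_lt_of_forall_lt
      intro z hz
      have := hρ z hz
      simpa [← NNReal.coe_lt_coe, coe_nnnorm] using this
    simpa using h1
  -- pick r between spectralRadius and 1
  obtain ⟨r, hr1, hr2⟩ := ENNReal.lt_iff_exists_nnreal_btwn.mp hrad
  have hr2' : r < 1 := by exact_mod_cast hr2
  have hten := spectrum.pow_nnnorm_pow_one_div_tendsto_nhds_spectralRadius A
  have hev : ∀ᶠ m : ℕ in Filter.atTop,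
      (‖A ^ m‖₊ : ENNReal) ^ (1 / (m : ℝ)) < (r : ENNReal) :=
    hten.eventually_lt_const hr1
  have hev2 : ∀ᶠ m : ℕ in Filter.atTop, ‖A ^ m‖₊ ≤ r ^ m := by
    filter_upwards [hev, Filter.eventually_ge_atTop 1] with m hm hm1
    have hm0 : (m : ℝ) ≠ 0 := by positivity
    have : ((‖A ^ m‖₊ : ENNReal) ^ (1 / (m : ℝ))) ^ (m : ℝ) ≤ (r : ENNReal) ^ (m : ℝ) :=
      ENNReal.rpow_le_rpow hm.le (by positivity)
    rw [← ENNReal.rpow_mul, one_div, inv_mul_cancel₀ hm0, ENNReal.rpow_one,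
      ENNReal.rpow_natCast] at this
    exact_mod_cast (by exact_mod_cast this : (‖A ^ m‖₊ : ENNReal) ≤ ((r ^ m : NNReal) : ENNReal))
  have hnormsum : Summable (fun m : ℕ => ‖W ^ m‖) := by
    have heq : ∀ m : ℕ, ‖W ^ m‖ = ‖A ^ m‖ := by
      intro m
      have : A ^ m = (W ^ m).map (Complex.ofReal) := by
        exact (map_pow (Complex.ofRealHom.mapMatrix) W m).symm
      rw [this, ← coe_nnnorm, ← coe_nnnorm, nnnorm_map_ofReal]
    apply Summable.of_norm_bounded_eventually (g := fun m : ℕ => (r : ℝ) ^ m)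
      (summable_geometric_of_lt_one r.coe_nonneg (by exact_mod_cast hr2'))
    rw [Nat.cofinite_eq_atTop]
    filter_upwards [hev2] with m hm
    rw [Real.norm_eq_abs, abs_norm, heq m, ← coe_nnnorm]
    exact_mod_cast hm
  have hsummable : Summable (fun m : ℕ => W ^ m) := .of_norm hnormsum
  have hHS := hsummable.hasSum
  -- (1 - W) * S = 1
  set S := ∑' m : ℕ, W ^ m with hS
  have hmul : HasSum (fun m : ℕ => W * W ^ m) (W * S) := hHS.mul_left W
  have hshift : S = 1 + W * S := by
    have h0 := Summable.tsum_eq_zero_add hsummable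
    rw [pow_zero] at h0
    have : ∑' m : ℕ, W ^ (m + 1) = W * S := by
      rw [← hmul.tsum_eq]
      exact tsum_congr fun m => by rw [pow_succ']
    rw [this] at h0
    exact h0
  have hunit : (1 - W) * S = 1 := by
    rw [sub_mul, one_mul]
    nth_rewrite 1 [hshift]
    abel
  have hinv : (1 - W)⁻¹ = S := Matrix.inv_eq_right_inv hunit
  rw [hinv]
  exact hHS

lemma entry_hasSum (W : Matrix (Fin n) (Fin n) ℝ) (S : Matrix (Fin n) (Fin n) ℝ)
    (h : HasSum (fun m : ℕ => W ^ m) S) (i j : Fin n) :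
    HasSum (fun m : ℕ => (W ^ m) i j) (S i j) := by
  let e : Matrix (Fin n) (Fin n) ℝ →+ ℝ :=
    { toFun := fun M => M i j
      map_zero' := rfl
      map_add' := fun _ _ => rfl }
  have hcont : Continuous e :=
    AddMonoidHomClass.continuous_of_bound e 1 fun M => by
      simpa using (show ‖e M‖ ≤ ‖M‖ from entry_norm_le_linfty M i j)
  exact h.map e hcont

end Aux

/-- Let `W` be entrywise nonnegative with spectral radius less than 1,
`V = (1 - W)⁻¹`, `W̃ = W * V`, `D = diag(V)⁻¹`, and `W̄ = W * D * V`.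
Then `W̄ ≤ W̃` entrywise. -/
theorem bowtie_le_access_matrix {n : ℕ} (W : Matrix (Fin n) (Fin n) ℝ)
    (hpos : ∀ i j, 0 ≤ W i j)
    (hρ : ∀ μ ∈ spectrum ℂ (W.map (Complex.ofReal)), ‖μ‖ < 1)
    (V D : Matrix (Fin n) (Fin n) ℝ)
    (hV : V = (1 - W)⁻¹)
    (hD : D = Matrix.diagonal (fun k => (V k k)⁻¹)) :
    ∀ i j, (W * D * V) i j ≤ (W * V) i j := by
  intro i j
  have hHS : HasSum (fun m : ℕ => W ^ m) V := hV ▸ hasSum_geom W i hρ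
  have hVnn : ∀ a b, 0 ≤ V a b := fun a b =>
    (entry_hasSum W V hHS a b).nonneg fun m => pow_entry_nonneg W hpos m a b
  have hVdiag : ∀ k, 1 ≤ V k k := by
    intro k
    have hsum := entry_hasSum W V hHS k k
    have h0 : (fun m : ℕ => (W ^ m) k k) 0 = 1 := by simp
    calc (1 : ℝ) = (fun m : ℕ => (W ^ m) k k) 0 := h0.symm
      _ ≤ V k k := Summable.le_tsum hsum.summable 0 (fun m _ => pow_entry_nonneg W hpos m k k) |>.trans_eq
          hsum.tsum_eq
  rw [hD, Matrix.mul_assoc, Matrix.mul_apply, Matrix.mul_apply]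
  apply Finset.sum_le_sum
  intro k _
  apply mul_le_mul_of_nonneg_left _ (hpos i k)
  rw [Matrix.diagonal_mul]
  have hk : 0 < V k k := lt_of_lt_of_le one_pos (hVdiag k)
  have : (V k k)⁻¹ ≤ 1 := inv_le_one_of_one_le₀ (hVdiag k)
  calc (V k k)⁻¹ * V k j ≤ 1 * V k j :=
        mul_le_mul_of_nonneg_right this (hVnn k j)
    _ = V k j := one_mul _
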